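/- arXiv:0907.0061 — 5 statements merged into one kernel-verified Lean document; each statement's English description precedes it below -/
import Mathlib

section
/- Let I be a small category, X : I ⥤ Cat a (strict) functor, and p : E ⥤ I any functor. There is a bijection between: (a) the set of pairs (F, φ) where F : Grothendieck X ⥤ E is a functor and φ : F ⋙ p ⟶ Grothendieck.forget X is a natural transformation; and (b) the set of left transformations from X to Γ(p), i.e. families consisting of a functor η_i : X.obj i ⥤ CostructuredArrow p i for every object i of I together with a natural transformation γ_u : η_i ⋙ CostructuredArrow.map u ⟶ X.map u ⋙ η_j for every morphism u : i ⟶ j of I, such that γ_{𝟙_i} is the identity (modulo the identifications X.map (𝟙 i) = 𝟙 and CostructuredArrow.map (𝟙 i) = 𝟙) and for composable u : i ⟶ j, v : j ⟶ k the 2-cell γ_{u ≫ v} equals the pasting composite of γ_u and γ_v (modulo the identifications X.map (u ≫ v) = X.map u ⋙ X.map v and CostructuredArrow.map (u ≫ v) = CostructuredArrow.map u ⋙ CostructuredArrow.map v). This is the object part of the adjunction between the Grothendieck construction and the comma-category functor Γ, specialized to ordinary (Set-enriched) categories. -/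
open CategoryTheory

universe v₁ u₁ v₂ u₂ v₃ u₃

variable {E : Type u₂} [Category.{v₂} E] {I : Type u₁} [Category.{v₁} I]

/-- `CostructuredArrow.map (𝟙 i)` is the identity functor. -/
theorem costructuredArrowMap_id (p : E ⥤ I) (i : I) :
    CostructuredArrow.map (S := p) (𝟙 i) = 𝟭 (CostructuredArrow p i) := by
  apply CategoryTheory.Functor.ext
  case h_obj => intro X; simp
  case h_map => aesop_cat

/-- `CostructuredArrow.map (u ≫ v)` is the composite
`CostructuredArrow.map u ⋙ CostructuredArrow.map v`. -/
theorem costructuredArrowMap_comp (p : E ⥤ I) {i j l : I} (u : i ⟶ j) (v : j ⟶ l) :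
    CostructuredArrow.map (S := p) (u ≫ v) =
      CostructuredArrow.map u ⋙ CostructuredArrow.map v := by
  apply CategoryTheory.Functor.ext
  case h_obj => intro X; simp
  case h_map => aesop_cat

/-- A left transformation from a functor `X : I ⥤ Cat` to the costructured-arrow diagram
`Γ(p) : i ↦ p ↓ i` of a functor `p : E ⥤ I`: it consists of functors
`η i : X.obj i ⥤ p ↓ i` together with 2-cells
`γ u : η i ⋙ CostructuredArrow.map u ⟶ X.map u ⋙ η j` for `u : i ⟶ j` which are unital
and compatible with composition, modulo the canonical identifications
`CostructuredArrow.map (𝟙 i) = 𝟭`, `X.map (𝟙 i) = 𝟭`,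
`CostructuredArrow.map (u ≫ v) = CostructuredArrow.map u ⋙ CostructuredArrow.map v` and
`X.map (u ≫ v) = X.map u ⋙ X.map v`. -/
structure GammaLeftTransformation (p : E ⥤ I) (X : I ⥤ Cat.{v₃, u₃}) where
  app : ∀ i : I, X.obj i ⥤ CostructuredArrow p i
  trans : ∀ {i j : I} (u : i ⟶ j), app i ⋙ CostructuredArrow.map u ⟶ (X.map u).toFunctor ⋙ app j
  trans_id : ∀ i : I,
    trans (𝟙 i) = eqToHom (by
      rw [costructuredArrowMap_id p i, X.map_id, Cat.Hom.id_toFunctor]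
      rw [Functor.comp_id]
      exact (Functor.id_comp _).symm)
  trans_comp : ∀ {i j l : I} (u : i ⟶ j) (v : j ⟶ l),
    trans (u ≫ v) =
      eqToHom (by rw [costructuredArrowMap_comp p u v] <;> exact (Functor.assoc _ _ _).symm) ≫
        Functor.whiskerRight (trans u) (CostructuredArrow.map v) ≫
        eqToHom (Functor.assoc _ _ _) ≫
        Functor.whiskerLeft (X.map u).toFunctor (trans v) ≫
        eqToHom (by rw [X.map_comp, Cat.Hom.comp_toFunctor] <;> exact (Functor.assoc _ _ _).symm)

namespace GammaAux

variable (p : E ⥤ I) (X : I ⥤ Cat.{v₃, u₃})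

lemma ιNatTrans_id_app_eq (i : I) (x : X.obj i) :
    (Grothendieck.ιNatTrans (F := X) (𝟙 i)).app x =
      eqToHom (by rw [X.map_id]; rfl) := by
  rw [Grothendieck.eqToHom_eq]
  apply Grothendieck.ext _ _ (by simp; rfl)
  exact Category.comp_id _

lemma ιNatTrans_comp_app_eq {i j l : I} (u : i ⟶ j) (v : j ⟶ l) (x : X.obj i) :
    (Grothendieck.ιNatTrans (F := X) (u ≫ v)).app x =
      ((Grothendieck.ιNatTrans u).app x ≫ (Grothendieck.ιNatTrans v).app ((X.map u).toFunctor.obj x)) ≫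
        eqToHom (by rw [X.map_comp]; rfl) := by
  rw [Grothendieck.eqToHom_eq]
  apply Grothendieck.ext _ _ (by dsimp [Grothendieck.ι]; simp)
  dsimp [Grothendieck.ι, Grothendieck.ιNatTrans]
  erw [(X.map v).toFunctor.map_id]
  show eqToHom (by simp : (X.map ((u ≫ v) ≫ 𝟙 l)).toFunctor.obj x =
      (X.map (u ≫ v)).toFunctor.obj x) ≫ 𝟙 ((X.map (u ≫ v)).toFunctor.obj x) =
    eqToHom (by simp : (X.map ((u ≫ v) ≫ 𝟙 l)).toFunctor.obj x =
      (X.map (𝟙 l)).toFunctor.obj ((X.map (u ≫ v)).toFunctor.obj x)) ≫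
    (X.map (𝟙 l)).toFunctor.map
      (eqToHom (by simp : (X.map (u ≫ v)).toFunctor.obj x =
        (X.map v).toFunctor.obj ((X.map u).toFunctor.obj x)) ≫
        𝟙 ((X.map v).toFunctor.obj ((X.map u).toFunctor.obj x)) ≫
        𝟙 ((X.map v).toFunctor.obj ((X.map u).toFunctor.obj x))) ≫
    eqToHom (by simp : (X.map (𝟙 l)).toFunctor.obj
      ((X.map v).toFunctor.obj ((X.map u).toFunctor.obj x)) = (X.map (u ≫ v)).toFunctor.obj x)
  simp [eqToHom_map]

variable (F : Grothendieck X ⥤ E) (φ : F ⋙ p ⟶ Grothendieck.forget X)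

def fwdApp (i : I) : X.obj i ⥤ CostructuredArrow p i where
  obj x := CostructuredArrow.mk (φ.app ⟨i, x⟩)
  map {x y} f := CostructuredArrow.homMk (F.map ((Grothendieck.ι X i).map f))
    (by exact (φ.naturality ((Grothendieck.ι X i).map f)).trans (Category.comp_id _))
  map_id x := by
    apply CostructuredArrow.hom_ext
    simp only [CostructuredArrow.homMk_left, CostructuredArrow.id_left]
    show F.map ((Grothendieck.ι X i).map (𝟙 x)) = _
    rw [(Grothendieck.ι X i).map_id]; exact F.map_id _
  map_comp f g := by
    apply CostructuredArrow.hom_ext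
    simp only [CostructuredArrow.comp_left, CostructuredArrow.homMk_left]
    show F.map ((Grothendieck.ι X i).map (f ≫ g)) = F.map ((Grothendieck.ι X i).map f) ≫ F.map ((Grothendieck.ι X i).map g)
    rw [(Grothendieck.ι X i).map_comp]; exact F.map_comp _ _

def fwdTrans {i j : I} (u : i ⟶ j) :
    fwdApp p X F φ i ⋙ CostructuredArrow.map u ⟶ (X.map u).toFunctor ⋙ fwdApp p X F φ j where
  app x := CostructuredArrow.homMk (F.map ((Grothendieck.ιNatTrans u).app x))
    (by exact φ.naturality ((Grothendieck.ιNatTrans u).app x))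
  naturality x y f := by
    apply CostructuredArrow.hom_ext
    have := congrArg F.map ((Grothendieck.ιNatTrans u).naturality f)
    simp only [F.map_comp] at this
    exact this

def fwd : GammaLeftTransformation p X where
  app := fwdApp p X F φ
  trans := fwdTrans p X F φ
  trans_id i := by
    apply NatTrans.ext; funext x
    apply CostructuredArrow.hom_ext
    simp only [fwdTrans, eqToHom_app, CostructuredArrow.eqToHom_left, CostructuredArrow.homMk_left]
    show F.map ((Grothendieck.ιNatTrans (𝟙 i)).app x) = _
    rw [ιNatTrans_id_app_eq, eqToHom_map]
    rfl
  trans_comp {i j l} u v := by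
    apply NatTrans.ext; funext x
    apply CostructuredArrow.hom_ext
    simp only [fwdTrans, NatTrans.comp_app, eqToHom_app, CostructuredArrow.comp_left,
      CostructuredArrow.eqToHom_left, Functor.whiskerRight_app, Functor.whiskerLeft_app,
      CostructuredArrow.homMk_left]
    show F.map ((Grothendieck.ιNatTrans (u ≫ v)).app x) = _
    rw [ιNatTrans_comp_app_eq, F.map_comp, F.map_comp, eqToHom_map]
    simp [CostructuredArrow.map]
    rfl


variable (T : GammaLeftTransformation p X)

def bwdHom {i j : I} (u : i ⟶ j) :
    (T.app i ⋙ CostructuredArrow.proj p i) ⟶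
      (X.map u).toFunctor ⋙ (T.app j ⋙ CostructuredArrow.proj p j) where
  app x := ((T.trans u).app x).left
  naturality x y f := by
    have := congrArg CommaMorphism.left ((T.trans u).naturality f)
    exact this

def bwdF : Grothendieck X ⥤ E :=
  Grothendieck.functorFrom (fun i => T.app i ⋙ CostructuredArrow.proj p i)
    (fun u => bwdHom p X T u)
    (fun i => by
      apply NatTrans.ext; funext x
      show ((T.trans (𝟙 i)).app x).left = _
      rw [T.trans_id]
      simp
      rfl)
    (fun i j l u v => by
      apply NatTrans.ext; funext x
      show ((T.trans (u ≫ v)).app x).left = _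
      rw [T.trans_comp]
      simp [bwdHom, CostructuredArrow.map, Comma.mapRight]
      rfl)

def bwdφ : bwdF p X T ⋙ p ⟶ Grothendieck.forget X where
  app a := ((T.app a.base).obj a.fiber).hom
  naturality a b f := by
    have h1 := CostructuredArrow.w ((T.trans f.base).app a.fiber)
    have h2 := CostructuredArrow.w ((T.app b.base).map f.fiber)
    simp only [Functor.comp_obj, Functor.comp_map, CostructuredArrow.map,
      Comma.mapRight, Functor.const] at h1 ⊢
    simp only [bwdF, Grothendieck.functorFrom, bwdHom, Grothendieck.forget]
    show p.map (((T.trans f.base).app a.fiber).left ≫ ((T.app b.base).map f.fiber).left) ≫ ((T.app b.base).obj b.fiber).hom = _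
    rw [p.map_comp, Category.assoc]
    show _ ≫ p.map ((T.app b.base).map f.fiber).left ≫ _ = _
    rw [h2, h1]
    rfl


lemma ι_comp_eq (a b : Grothendieck X) (f : a ⟶ b) :
    (Grothendieck.ιNatTrans f.base).app a.fiber ≫ (Grothendieck.ι X b.base).map f.fiber = f := by
  apply Grothendieck.ext _ _ (by exact Category.comp_id _)
  dsimp [Grothendieck.ι, Grothendieck.ιNatTrans]
  erw [(X.map (𝟙 b.base)).toFunctor.map_id, Category.id_comp, eqToHom_trans_assoc, eqToHom_trans_assoc, eqToHom_refl, Category.id_comp]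

lemma GLT_ext (T1 T2 : GammaLeftTransformation p X) (h : T1.app = T2.app)
    (ht : ∀ {i j : I} (u : i ⟶ j),
      T1.trans u = eqToHom (by rw [h]) ≫ T2.trans u ≫ eqToHom (by rw [h])) : T1 = T2 := by
  obtain ⟨a1, t1, hi1, hc1⟩ := T1
  obtain ⟨a2, t2, hi2, hc2⟩ := T2
  dsimp only at h
  subst h
  have ht' : @t1 = @t2 := by
    funext i j u
    have := ht u
    simpa using this
  subst ht'
  rfl

lemma sigma_ext (G G' : Grothendieck X ⥤ E) (ψ : G ⋙ p ⟶ Grothendieck.forget X)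
    (ψ' : G' ⋙ p ⟶ Grothendieck.forget X) (h : G = G')
    (happ : ∀ a, ψ.app a = eqToHom (by rw [h]) ≫ ψ'.app a) :
    (⟨G, ψ⟩ : Σ F : Grothendieck X ⥤ E, (F ⋙ p ⟶ Grothendieck.forget X)) = ⟨G', ψ'⟩ := by
  subst h
  have : ψ = ψ' := by
    apply NatTrans.ext; funext a
    simpa using happ a
  rw [this]

end GammaAux

/-- The object part of the adjunction between the Grothendieck construction and the
comma-category functor `Γ`: pairs of a functor `F : Grothendieck X ⥤ E` and a natural
transformation `F ⋙ p ⟶ Grothendieck.forget X` correspond bijectively to left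
transformations from `X` to `Γ(p) = (i ↦ p ↓ i)`. -/
theorem grothendieck_hom_equiv_gamma_transformations
    (p : E ⥤ I) (X : I ⥤ Cat.{v₃, u₃}) :
    Nonempty ((Σ F : Grothendieck X ⥤ E, (F ⋙ p ⟶ Grothendieck.forget X)) ≃
      GammaLeftTransformation p X) := by
  refine ⟨{
    toFun := fun Fφ => GammaAux.fwd p X Fφ.1 Fφ.2,
    invFun := fun T => ⟨GammaAux.bwdF p X T, GammaAux.bwdφ p X T⟩,
    left_inv := ?_, right_inv := ?_ }⟩
  · rintro ⟨F, φ⟩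
    apply GammaAux.sigma_ext
    case h =>
      apply CategoryTheory.Functor.ext
      case h_obj => intro a; rfl
      case h_map =>
        intro a b f
        have hmap : (GammaAux.bwdF p X (GammaAux.fwd p X F φ)).map f
            = F.map ((Grothendieck.ιNatTrans f.base).app a.fiber) ≫
              F.map ((Grothendieck.ι X b.base).map f.fiber) := rfl
        rw [hmap, ← F.map_comp, GammaAux.ι_comp_eq]
        simp
        erw [eqToHom_refl, eqToHom_refl, Category.id_comp, Category.comp_id]
        rfl
    case happ =>
      intro a
      show φ.app a = _
      simp
      erw [eqToHom_refl, Category.id_comp]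
  · intro T
    apply GammaAux.GLT_ext
    case h =>
      funext i
      apply CategoryTheory.Functor.ext
      case h_obj => intro x; exact (CostructuredArrow.eq_mk _).symm
      case h_map =>
        intro x y f
        apply CostructuredArrow.hom_ext
        show (GammaAux.bwdHom p X T (𝟙 i)).app x ≫
          ((T.app i).map (eqToHom (by simp) ≫ f)).left = _
        rw [(T.app i).map_comp]
        have hl : (GammaAux.bwdHom p X T (𝟙 i)).app x = ((T.trans (𝟙 i)).app x).left := rfl
        rw [hl, T.trans_id]
        simp [eqToHom_map]
        erw [CostructuredArrow.eqToHom_left, eqToHom_trans_assoc, eqToHom_refl, Category.comp_id]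
        rfl
    case ht =>
      intro i j u
      apply NatTrans.ext; funext x
      apply CostructuredArrow.hom_ext
      show (GammaAux.bwdHom p X T u).app x ≫
        ((T.app j ⋙ CostructuredArrow.proj p j).map (𝟙 _)) = _
      rw [(T.app j ⋙ CostructuredArrow.proj p j).map_id]
      have hl : (GammaAux.bwdHom p X T u).app x = ((T.trans u).app x).left := rfl
      rw [hl]
      simp
      erw [eqToHom_refl, eqToHom_refl, Category.id_comp, Category.comp_id]
end

section
/- Let I be a small category, X : I ⥤ Cat a (strict) functor, and A any category. There is an equivalence of categories between the functor category (Grothendieck X) ⥤ A and the category LT(X, A) of left transformations from X to the constant diagram at A: the objects of LT(X, A) are families consisting of a functor η_i : X.obj i ⥤ A for every object i of I together with a natural transformation γ_u : η_i ⟶ X.map u ⋙ η_j for every morphism u : i ⟶ j of I, such that γ_{𝟙_i} is the identity (modulo the identification X.map (𝟙 i) = 𝟙) and γ_{u ≫ v} equals the pasting composite of γ_u and γ_v for composable u, v (modulo the identification X.map (u ≫ v) = X.map u ⋙ X.map v); a morphism (η, γ) → (η', γ') in LT(X, A) is a family of natural transformations θ_i : η_i ⟶ η'_i such that for every u : i ⟶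 j the square formed by γ_u, γ'_u, θ_i and the whiskering of θ_j by X.map u commutes. (This is the statement that the Grothendieck construction is left 2-adjoint to the diagonal, specialized to ordinary categories.) -/
open CategoryTheory

universe v u v₁ u₁ v₂ u₂

variable {I : Type u₁} [Category.{v₁} I]

/-- A left transformation from a functor `X : I ⥤ Cat` to the constant diagram at a
category `A`: a family of functors `η i : X.obj i ⥤ A` together with natural
transformations `γ u : η i ⟶ X.map u ⋙ η j` for every `u : i ⟶ j`, such that `γ (𝟙 i)`
is the identity (modulo the identification `X.map (𝟙 i) = 𝟭`) and `γ (u ≫ v)` is the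
pasting composite of `γ u` and `γ v` (modulo the identification
`X.map (u ≫ v) = X.map u ⋙ X.map v`). -/
structure LeftTransformationToConst (X : I ⥤ Cat.{v₂, u₂}) (A : Type u) [Category.{v} A] where
  app : ∀ i : I, X.obj i ⥤ A
  trans : ∀ {i j : I} (u : i ⟶ j), app i ⟶ (X.map u).toFunctor ⋙ app j
  trans_id : ∀ i : I,
    trans (𝟙 i) = eqToHom (by rw [X.map_id]; exact (Functor.id_comp _).symm)
  trans_comp : ∀ {i j l : I} (u : i ⟶ j) (v : j ⟶ l),
    trans (u ≫ v) = trans u ≫ Functor.whiskerLeft (X.map u).toFunctor (trans v) ≫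
      eqToHom (by rw [X.map_comp]; exact (Functor.assoc _ _ _).symm)

namespace LeftTransformationToConst

variable {X : I ⥤ Cat.{v₂, u₂}} {A : Type u} [Category.{v} A]

/-- A morphism of left transformations: a family of natural transformations
`θ i : η i ⟶ η' i` commuting with the structure 2-cells. -/
@[ext]
structure Hom (P Q : LeftTransformationToConst X A) where
  app : ∀ i : I, P.app i ⟶ Q.app i
  compat : ∀ {i j : I} (u : i ⟶ j),
    P.trans u ≫ Functor.whiskerLeft (X.map u).toFunctor (app j) = app i ≫ Q.trans u

/-- The category of left transformations from `X` to the constant diagram at `A`. -/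
instance : Category (LeftTransformationToConst X A) where
  Hom := Hom
  id P :=
    { app := fun i => 𝟙 (P.app i)
      compat := by intro i j u; simp }
  comp {P Q R} f g :=
    { app := fun i => f.app i ≫ g.app i
      compat := by
        intro i j u
        rw [Functor.whiskerLeft_comp, ← Category.assoc, f.compat u, Category.assoc, g.compat u,
          ← Category.assoc] }
  id_comp f := by apply Hom.ext; funext i; exact Category.id_comp _
  comp_id f := by apply Hom.ext; funext i; exact Category.comp_id _
  assoc f g h := by apply Hom.ext; funext i; exact Category.assoc _ _ _

end LeftTransformationToConst


namespace GrothendieckEquivAux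

open Grothendieck

variable {X : I ⥤ Cat.{v₂, u₂}} {A : Type u} [Category.{v} A]

lemma auxA (i : I) (d : X.obj i) :
    (Grothendieck.ιNatTrans (F := X) (𝟙 i)).app d = eqToHom (by simp) := by
  rw [Grothendieck.eqToHom_eq]
  exact Grothendieck.ext _ _ rfl (by erw [Category.comp_id]; rfl)

lemma auxB {x y : Grothendieck X} (f : x ⟶ y) :
    f = (Grothendieck.ιNatTrans f.base).app x.fiber ≫ (Grothendieck.ι X y.base).map f.fiber := by
  apply Grothendieck.ext _ _ (by exact (Category.comp_id _).symm) ?_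
  dsimp only [Grothendieck.ι, Grothendieck.ιNatTrans]
  simp [Grothendieck.comp_fiber]
  erw [CategoryTheory.Functor.map_id (X.map (𝟙 y.base)).toFunctor]
  simp
  erw [eqToHom_trans_assoc]

lemma auxC {i j l : I} (u : i ⟶ j) (v : j ⟶ l) (d : X.obj i) :
    (Grothendieck.ιNatTrans (F := X) (u ≫ v)).app d =
      (Grothendieck.ιNatTrans u).app d ≫ (Grothendieck.ιNatTrans v).app ((X.map u).toFunctor.obj d) ≫
        eqToHom (by simp) := by
  rw [Grothendieck.eqToHom_eq]
  apply Grothendieck.ext _ _ (by simp; erw [eqToHom_refl, Category.comp_id]; exact rfl) ?_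
  simp [Grothendieck.comp_fiber]
  erw [CategoryTheory.Functor.map_id (self := (X.map _).toFunctor)]
  erw [CategoryTheory.Functor.map_id (self := (X.map _).toFunctor)]
  have key : ∀ {a b c e : X.obj l} (p1 : a = e) (p2 : a = b) (p3 : b = c) (p4 : c = e),
      eqToHom p1 ≫ 𝟙 e = eqToHom p2 ≫ 𝟙 b ≫ eqToHom p3 ≫ 𝟙 c ≫ eqToHom p4 := by
    intros; subst_vars; simp
  exact key _ _ _ _

/-- From a functor on the Grothendieck construction, extract a left transformation. -/
@[simps]
def ofFunctor (F : Grothendieck X ⥤ A) : LeftTransformationToConst X A where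
  app i := Grothendieck.ι X i ⋙ F
  trans {i j} u := Functor.whiskerRight (Grothendieck.ιNatTrans u) F
  trans_id i := by
    ext d
    simp only [Functor.whiskerRight_app, auxA, eqToHom_map, eqToHom_app]
  trans_comp {i j l} u v := by
    ext d
    simp only [Functor.whiskerRight_app, auxC, NatTrans.comp_app, Functor.whiskerLeft_app, eqToHom_app,
      Functor.map_comp, eqToHom_map]

/-- The functor from the functor category to left transformations. -/
@[simps]
def toLT : (Grothendieck X ⥤ A) ⥤ LeftTransformationToConst X A where
  obj := ofFunctor
  map {F G} α :=
    { app := fun i => Functor.whiskerLeft (Grothendieck.ι X i) α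
      compat := by
        intro i j u
        ext d
        exact α.naturality _ }
  map_id F := by apply LeftTransformationToConst.Hom.ext; funext i; rfl
  map_comp f g := by apply LeftTransformationToConst.Hom.ext; funext i; rfl

/-- The functor from left transformations to the functor category. -/
@[simps]
def fromLT : LeftTransformationToConst X A ⥤ (Grothendieck X ⥤ A) where
  obj P := Grothendieck.functorFrom P.app P.trans
    (fun i => P.trans_id i) (fun _ _ _ u v => P.trans_comp u v)
  map {P Q} θ :=
    { app := fun x => (θ.app x.base).app x.fiber
      naturality := by
        intro x y f
        dsimp [Grothendieck.functorFrom]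
        rw [Category.assoc, (θ.app y.base).naturality f.fiber, ← Category.assoc, ← Category.assoc]
        congr 1
        exact congrArg (fun t => NatTrans.app t x.fiber) (θ.compat f.base) }
  map_id P := by ext x; rfl
  map_comp f g := by ext x; rfl

end GrothendieckEquivAux

/-- The Grothendieck construction is left 2-adjoint to the diagonal: the functor category
`Grothendieck X ⥤ A` is equivalent to the category of left transformations from `X` to
the constant diagram at `A`. -/
theorem grothendieck_functor_category_equiv_leftTransformations
    (X : I ⥤ Cat.{v₂, u₂}) (A : Type u) [Category.{v} A] :
    Nonempty ((Grothendieck X ⥤ A) ≌ LeftTransformationToConst X A) := by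
  open GrothendieckEquivAux in
  refine ⟨CategoryTheory.Equivalence.mk toLT fromLT ?_ ?_⟩
  · refine NatIso.ofComponents (fun F => NatIso.ofComponents (fun x => Iso.refl _) ?_) ?_
    · intro x y f
      dsimp [fromLT, Grothendieck.functorFrom]
      exact (Category.comp_id _).trans ((congrArg F.map (auxB f)).trans ((F.map_comp _ _).trans (Category.id_comp _).symm))
    · intro F G α
      ext x
      exact (Category.comp_id _).trans (Category.id_comp _).symm
  · refine NatIso.ofComponents (fun P => ?_) ?_
    · refine
        { hom :=
            { app := fun i =>
                { app := fun d => 𝟙 _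
                  naturality := ?_ }
              compat := ?_ }
          inv :=
            { app := fun i =>
                { app := fun d => 𝟙 _
                  naturality := ?_ }
              compat := ?_ }
          hom_inv_id := ?_
          inv_hom_id := ?_ }
      · intro d d' f
        dsimp [fromLT, toLT, Grothendieck.functorFrom]
        erw [Category.comp_id, Category.id_comp]
        show (P.trans (𝟙 i)).app d ≫ (P.app i).map (eqToHom (by simp) ≫ f) = (P.app i).map f
        rw [P.trans_id, (P.app i).map_comp]; simp [eqToHom_app, eqToHom_map]
      · intro i j u
        ext d
        dsimp [fromLT, toLT, Grothendieck.functorFrom]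
        erw [Category.comp_id, Category.id_comp]
        exact (congrArg (fun t => (P.trans u).app d ≫ t) ((P.app j).map_id _)).trans (Category.comp_id _)
      · intro d d' f
        dsimp [fromLT, toLT, Grothendieck.functorFrom]
        erw [Category.comp_id, Category.id_comp]
        show (P.app i).map f = (P.trans (𝟙 i)).app d ≫ (P.app i).map (eqToHom (by simp) ≫ f)
        rw [P.trans_id, (P.app i).map_comp]; simp [eqToHom_app, eqToHom_map]
      · intro i j u
        ext d
        dsimp [fromLT, toLT, Grothendieck.functorFrom]
        erw [Category.comp_id, Category.id_comp]
        exact ((congrArg (fun t => (P.trans u).app d ≫ t) ((P.app j).map_id _)).trans (Category.comp_id _)).symm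
      · apply LeftTransformationToConst.Hom.ext
        funext i
        ext d
        exact Category.id_comp _
      · apply LeftTransformationToConst.Hom.ext
        funext i
        ext d
        exact Category.id_comp _
    · intro P Q φ
      apply LeftTransformationToConst.Hom.ext
      funext i
      ext d
      exact (Category.comp_id _).trans (Category.id_comp _).symm
end

section
/- Let k be a commutative ring, G a group, and A a k-algebra. The assignment sending a G-grading 𝒜 of A to the k-linear map ρ_𝒜 : A → A ⊗[k] MonoidAlgebra k G defined by ρ_𝒜(a) = Σ_{g ∈ G} (the 𝒜 g-component of a) ⊗ₜ single g 1 is a bijection from the set of G-gradings of A (pairs of a family 𝒜 : G → Submodule k A together with graded-algebra data making A internally graded by 𝒜) onto the set of comodule-algebra structures on A over MonoidAlgebra k G. -/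
open TensorProduct

noncomputable section

variable (k G A : Type*) [CommRing k] [Group G] [DecidableEq G] [Ring A] [Algebra k A]

/-- The counit of the standard bialgebra structure on the group algebra `k[G]`:
it is the `k`-linear map with `counit (single g r) = r`; in particular
`counit (single g 1) = 1`, so that every group element is grouplike. -/
def gaCounit : MonoidAlgebra k G →ₗ[k] k :=
  Finsupp.lsum k (fun _ => LinearMap.id) ∘ₗ (MonoidAlgebra.coeffLinearEquiv k).toLinearMap

/-- The comultiplication of the standard bialgebra structure on the group algebra `k[G]`:
it is the `k`-linear map with `comul (single g r) = r • (single g 1 ⊗ₜ single g 1)`;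
in particular `comul (single g 1) = single g 1 ⊗ₜ single g 1`, so that every group
element is grouplike. -/
def gaComul : MonoidAlgebra k G →ₗ[k] MonoidAlgebra k G ⊗[k] MonoidAlgebra k G :=
  Finsupp.lsum k (fun g =>
    LinearMap.toSpanSingleton k (MonoidAlgebra k G ⊗[k] MonoidAlgebra k G)
      (MonoidAlgebra.single g (1 : k) ⊗ₜ[k] MonoidAlgebra.single g (1 : k))) ∘ₗ
    (MonoidAlgebra.coeffLinearEquiv k).toLinearMap

/-- A `G`-grading of the `k`-algebra `A`: a family `𝒜 : G → Submodule k A` forming an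
internal direct sum decomposition of `A` with `1 ∈ 𝒜 1` and `𝒜 g * 𝒜 h ⊆ 𝒜 (g * h)`. -/
structure GroupGrading where
  grading : G → Submodule k A
  decomposition : DirectSum.Decomposition grading
  one_mem : (1 : A) ∈ grading 1
  mul_mem : ∀ {g h : G} {x y : A}, x ∈ grading g → y ∈ grading h → x * y ∈ grading (g * h)

/-- The map `ρ_𝒜 : A → A ⊗[k] k[G]` associated to a grading `𝒜`, defined by
`ρ_𝒜 a = Σ_{g ∈ G} (the 𝒜 g-component of a) ⊗ₜ single g 1`. -/
def rhoOf (𝒜 : GroupGrading k G A) : A → A ⊗[k] MonoidAlgebra k G :=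
  letI := 𝒜.decomposition
  fun a => ∑ᶠ g : G, ((DirectSum.decompose 𝒜.grading a) g : A) ⊗ₜ[k] MonoidAlgebra.single g 1

end

noncomputable section CM

variable {k G A : Type*} [CommRing k] [Group G] [DecidableEq G] [Ring A] [Algebra k A]

lemma gaCounit_single (g : G) (r : k) : gaCounit k G (MonoidAlgebra.single g r) = r := by
  rw [gaCounit]
  erw [Finsupp.lsum_single (S := k)]
  rfl

lemma gaComul_single (g : G) :
    gaComul k G (MonoidAlgebra.single g 1) =
      MonoidAlgebra.single g 1 ⊗ₜ[k] MonoidAlgebra.single g 1 := by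
  rw [gaComul]
  erw [Finsupp.lsum_single (S := k)]
  simp [LinearMap.toSpanSingleton_apply]

namespace CohenMontgomery

variable (𝒜 : GroupGrading k G A)

/-- The grading reindexed by `Additive G`. -/
def gr' : Additive G → Submodule k A := fun g => 𝒜.grading g.toMul

instance : SetLike.GradedMonoid (gr' 𝒜) where
  one_mem := 𝒜.one_mem
  mul_mem _ _ _ _ hx hy := 𝒜.mul_mem hx hy

instance : DirectSum.Decomposition (gr' 𝒜) := 𝒜.decomposition

instance : GradedAlgebra (gr' 𝒜) := ⟨⟩

/-- The comodule structure map associated to a grading. -/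
def fwdHom : A →ₐ[k] A ⊗[k] MonoidAlgebra k G :=
  (DirectSum.toAlgebra k (fun g : Additive G => ↥(gr' 𝒜 g))
    (fun g => ((TensorProduct.mk k A (MonoidAlgebra k G)).flip
        (MonoidAlgebra.single g.toMul 1)).comp (gr' 𝒜 g).subtype)
    (by
      simp only [LinearMap.comp_apply, Submodule.subtype_apply, SetLike.coe_gOne]
      rw [Algebra.TensorProduct.one_def, MonoidAlgebra.one_def]
      rfl)
    (by
      intro i j ai aj
      simp only [LinearMap.comp_apply, Submodule.subtype_apply, SetLike.coe_gMul,
        LinearMap.flip_apply, TensorProduct.mk_apply]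
      rw [Algebra.TensorProduct.tmul_mul_tmul, MonoidAlgebra.single_mul_single, one_mul]
      rfl)).comp
    (DirectSum.decomposeAlgEquiv (gr' 𝒜)).toAlgHom

lemma fwdHom_apply_of_mem {g : G} {a : A} (ha : a ∈ 𝒜.grading g) :
    fwdHom 𝒜 a = a ⊗ₜ[k] MonoidAlgebra.single g 1 := by
  have ha' : a ∈ gr' 𝒜 (Additive.ofMul g) := ha
  rw [fwdHom, AlgHom.comp_apply]
  erw [DirectSum.decomposeAlgEquiv_apply]
  rw [DirectSum.decompose_of_mem _ ha', DirectSum.toAlgebra_apply]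
  erw [DirectSum.toSemiring_of]
  rfl

end CohenMontgomery
end CM

noncomputable section Fwd
namespace CohenMontgomery
variable {k G A : Type*} [CommRing k] [Group G] [DecidableEq G] [Ring A] [Algebra k A]
variable (𝒜 : GroupGrading k G A)

lemma rhoOf_finite (a : A) :
    letI := 𝒜.decomposition
    (Function.support fun g : G =>
      ((DirectSum.decompose 𝒜.grading a) g : A) ⊗ₜ[k] MonoidAlgebra.single g (1 : k)).Finite := by
  classical
  letI := 𝒜.decomposition
  apply Set.Finite.subset (DirectSum.decompose 𝒜.grading a).support.finite_toSet
  intro g hg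
  simp only [Function.mem_support] at hg
  by_contra h
  rw [Finset.mem_coe, DFinsupp.notMem_support_iff] at h
  exact hg (by rw [h, ZeroMemClass.coe_zero, TensorProduct.zero_tmul])

lemma rhoOf_of_mem {g : G} {a : A} (ha : a ∈ 𝒜.grading g) :
    rhoOf k G A 𝒜 a = a ⊗ₜ[k] MonoidAlgebra.single g (1 : k) := by
  letI := 𝒜.decomposition
  rw [rhoOf, finsum_eq_single _ g ?h]
  · rw [DirectSum.decompose_of_mem _ ha, DirectSum.of_eq_same]
  case h =>
    intro h hne
    rw [DirectSum.decompose_of_mem _ ha, DirectSum.of_eq_of_ne _ _ _ hne]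
    simp

lemma rhoOf_zero : rhoOf k G A 𝒜 0 = 0 := by
  letI := 𝒜.decomposition
  rw [rhoOf]
  apply finsum_eq_zero_of_forall_eq_zero
  intro g
  rw [DirectSum.decompose_zero]
  simp

lemma rhoOf_add (a b : A) :
    rhoOf k G A 𝒜 (a + b) = rhoOf k G A 𝒜 a + rhoOf k G A 𝒜 b := by
  letI := 𝒜.decomposition
  rw [rhoOf]
  have : ∀ g : G, ((DirectSum.decompose 𝒜.grading (a + b)) g : A) ⊗ₜ[k] MonoidAlgebra.single g (1:k)
      = ((DirectSum.decompose 𝒜.grading a) g : A) ⊗ₜ[k] MonoidAlgebra.single g (1:k)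
        + ((DirectSum.decompose 𝒜.grading b) g : A) ⊗ₜ[k] MonoidAlgebra.single g (1:k) := by
    intro g
    rw [DirectSum.decompose_add, DirectSum.add_apply, Submodule.coe_add, TensorProduct.add_tmul]
  rw [finsum_congr this, finsum_add_distrib (rhoOf_finite 𝒜 a) (rhoOf_finite 𝒜 b)]
  rfl

lemma fwdHom_eq_rhoOf : ⇑(fwdHom 𝒜) = rhoOf k G A 𝒜 := by
  letI := 𝒜.decomposition
  funext a
  refine DirectSum.Decomposition.inductionOn 𝒜.grading
    (motive := fun a => fwdHom 𝒜 a = rhoOf k G A 𝒜 a) ?_ ?_ ?_ a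
  · show fwdHom 𝒜 0 = rhoOf k G A 𝒜 0
    rw [map_zero, rhoOf_zero]
  · rintro g ⟨m, hm⟩
    rw [fwdHom_apply_of_mem 𝒜 hm, rhoOf_of_mem 𝒜 hm]
  · intro x y hx hy
    rw [map_add, rhoOf_add, hx, hy]

lemma fwdHom_counit :
    TensorProduct.map LinearMap.id (gaCounit k G) ∘ₗ (fwdHom 𝒜).toLinearMap
      = (TensorProduct.rid k A).symm.toLinearMap := by
  letI := 𝒜.decomposition
  apply LinearMap.ext
  intro a
  refine DirectSum.Decomposition.inductionOn 𝒜.grading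
    (motive := fun a => (TensorProduct.map LinearMap.id (gaCounit k G) ∘ₗ (fwdHom 𝒜).toLinearMap) a
      = (TensorProduct.rid k A).symm.toLinearMap a) ?_ ?_ ?_ a
  · show (TensorProduct.map LinearMap.id (gaCounit k G) ∘ₗ (fwdHom 𝒜).toLinearMap) 0
      = (TensorProduct.rid k A).symm.toLinearMap 0
    rw [map_zero, map_zero]
  · rintro g ⟨m, hm⟩
    show (TensorProduct.map LinearMap.id (gaCounit k G) ∘ₗ (fwdHom 𝒜).toLinearMap) m
      = (TensorProduct.rid k A).symm.toLinearMap m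
    simp only [LinearMap.comp_apply, AlgHom.toLinearMap_apply, LinearEquiv.coe_coe]
    rw [fwdHom_apply_of_mem 𝒜 hm, TensorProduct.map_tmul, gaCounit_single,
      TensorProduct.rid_symm_apply, LinearMap.id_apply]
  · intro x y hx hy
    show (TensorProduct.map LinearMap.id (gaCounit k G) ∘ₗ (fwdHom 𝒜).toLinearMap) (x + y)
      = (TensorProduct.rid k A).symm.toLinearMap (x + y)
    rw [map_add, map_add, hx, hy]

lemma fwdHom_coassoc :
    TensorProduct.map (fwdHom 𝒜).toLinearMap LinearMap.id ∘ₗ (fwdHom 𝒜).toLinearMap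
      = (TensorProduct.assoc k A (MonoidAlgebra k G) (MonoidAlgebra k G)).symm.toLinearMap
          ∘ₗ TensorProduct.map LinearMap.id (gaComul k G) ∘ₗ (fwdHom 𝒜).toLinearMap := by
  letI := 𝒜.decomposition
  apply LinearMap.ext
  intro a
  refine DirectSum.Decomposition.inductionOn 𝒜.grading
    (motive := fun a => (TensorProduct.map (fwdHom 𝒜).toLinearMap LinearMap.id
        ∘ₗ (fwdHom 𝒜).toLinearMap) a
      = ((TensorProduct.assoc k A (MonoidAlgebra k G) (MonoidAlgebra k G)).symm.toLinearMap
          ∘ₗ TensorProduct.map LinearMap.id (gaComul k G) ∘ₗ (fwdHom 𝒜).toLinearMap) a)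
    ?_ ?_ ?_ a
  · show (TensorProduct.map (fwdHom 𝒜).toLinearMap LinearMap.id ∘ₗ (fwdHom 𝒜).toLinearMap) 0
      = ((TensorProduct.assoc k A (MonoidAlgebra k G) (MonoidAlgebra k G)).symm.toLinearMap
          ∘ₗ TensorProduct.map LinearMap.id (gaComul k G) ∘ₗ (fwdHom 𝒜).toLinearMap) 0
    rw [map_zero, map_zero]
  · rintro g ⟨m, hm⟩
    show (TensorProduct.map (fwdHom 𝒜).toLinearMap LinearMap.id ∘ₗ (fwdHom 𝒜).toLinearMap) m
      = ((TensorProduct.assoc k A (MonoidAlgebra k G) (MonoidAlgebra k G)).symm.toLinearMap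
          ∘ₗ TensorProduct.map LinearMap.id (gaComul k G) ∘ₗ (fwdHom 𝒜).toLinearMap) m
    simp only [LinearMap.comp_apply, AlgHom.toLinearMap_apply, LinearEquiv.coe_coe]
    rw [fwdHom_apply_of_mem 𝒜 hm, TensorProduct.map_tmul, TensorProduct.map_tmul]
    simp only [AlgHom.toLinearMap_apply, LinearMap.id_apply]
    rw [fwdHom_apply_of_mem 𝒜 hm, gaComul_single, TensorProduct.assoc_symm_tmul]
  · intro x y hx hy
    show (TensorProduct.map (fwdHom 𝒜).toLinearMap LinearMap.id ∘ₗ (fwdHom 𝒜).toLinearMap) (x + y)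
      = ((TensorProduct.assoc k A (MonoidAlgebra k G) (MonoidAlgebra k G)).symm.toLinearMap
          ∘ₗ TensorProduct.map LinearMap.id (gaComul k G) ∘ₗ (fwdHom 𝒜).toLinearMap) (x + y)
    rw [map_add, map_add, hx, hy]

end CohenMontgomery
end Fwd

noncomputable section Bwd
open scoped DirectSum
namespace CohenMontgomery
variable {k G A : Type*} [CommRing k] [Group G] [DecidableEq G] [Ring A] [Algebra k A]
variable (ρ : A →ₐ[k] A ⊗[k] MonoidAlgebra k G)

variable (k G) in
/-- Coefficients of a tensor with the group algebra. -/
def tE (M : Type*) [AddCommGroup M] [Module k M] :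
    M ⊗[k] MonoidAlgebra k G ≃ₗ[k] (G →₀ M) :=
  (TensorProduct.congr (LinearEquiv.refl k M) (MonoidAlgebra.coeffLinearEquiv k)).trans
    (TensorProduct.finsuppScalarRight k k M G)

lemma tE_tmul_apply {M : Type*} [AddCommGroup M] [Module k M] (m : M) (p : G →₀ k) (i : G) :
    tE k G M (m ⊗ₜ[k] MonoidAlgebra.ofCoeff p) i = p i • m := by
  simp [tE]

lemma tE_symm_single {M : Type*} [AddCommGroup M] [Module k M] (i : G) (m : M) :
    (tE k G M).symm (Finsupp.single i m) = m ⊗ₜ[k] MonoidAlgebra.single i 1 := by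
  simp [tE]

/-- The "coefficient" map `A →ₗ (G →₀ A)` associated to a comodule structure map. -/
def Fm : A →ₗ[k] (G →₀ A) :=
  (tE k G A).toLinearMap ∘ₗ ρ.toLinearMap

lemma rho_eq_sum (a : A) :
    ρ a = (Fm ρ a).sum fun g x => x ⊗ₜ[k] MonoidAlgebra.single g (1 : k) := by
  have h1 : ρ a = (tE k G A).symm (Fm ρ a) := by
    rw [Fm]
    simp only [LinearMap.comp_apply, LinearEquiv.coe_toLinearMap, AlgHom.toLinearMap_apply,
      LinearEquiv.symm_apply_apply]
  conv_lhs => rw [h1, ← LinearEquiv.coe_toLinearMap, ← Finsupp.sum_single (Fm ρ a)]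
  rw [map_finsuppSum]
  simp only [LinearEquiv.coe_toLinearMap, tE_symm_single]

lemma Fm_of_rho_eq {g : G} {a : A} (ha : ρ a = a ⊗ₜ[k] MonoidAlgebra.single g (1 : k)) :
    Fm ρ a = Finsupp.single g a := by
  have ha' : ρ.toLinearMap a = a ⊗ₜ[k] MonoidAlgebra.single g (1 : k) := ha
  ext h
  rw [Fm, LinearMap.comp_apply, LinearEquiv.coe_toLinearMap]
  erw [ha']
  erw [tE_tmul_apply]
  rw [Finsupp.single_apply, Finsupp.single_apply]
  by_cases hgh : g = h <;> simp [hgh]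

lemma sum_Fm
    (hcu : TensorProduct.map LinearMap.id (gaCounit k G) ∘ₗ ρ.toLinearMap
      = (TensorProduct.rid k A).symm.toLinearMap) (a : A) :
    ((Fm ρ a).sum fun _ x => x) = a := by
  have h := LinearMap.congr_fun hcu a
  simp only [LinearMap.comp_apply, AlgHom.toLinearMap_apply] at h
  rw [rho_eq_sum ρ a, map_finsuppSum] at h
  simp only [TensorProduct.map_tmul, LinearMap.id_apply] at h
  have h2 := congrArg (fun t => (TensorProduct.rid k A).toLinearMap t) h
  simp only [map_finsuppSum, LinearEquiv.coe_toLinearMap, LinearEquiv.apply_symm_apply] at h2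
  conv_rhs => rw [← h2]
  apply Finsupp.sum_congr
  intro g' _
  rw [gaCounit_single, TensorProduct.rid_tmul, one_smul]

lemma rho_Fm_apply
    (hco : TensorProduct.map ρ.toLinearMap LinearMap.id ∘ₗ ρ.toLinearMap
      = (TensorProduct.assoc k A (MonoidAlgebra k G) (MonoidAlgebra k G)).symm.toLinearMap
          ∘ₗ TensorProduct.map LinearMap.id (gaComul k G) ∘ₗ ρ.toLinearMap) (a : A) (g : G) :
    ρ (Fm ρ a g) = (Fm ρ a g) ⊗ₜ[k] MonoidAlgebra.single g (1 : k) := by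
  classical
  have h := LinearMap.congr_fun hco a
  simp only [LinearMap.comp_apply, AlgHom.toLinearMap_apply] at h
  rw [rho_eq_sum ρ a, map_finsuppSum, map_finsuppSum, map_finsuppSum] at h
  simp only [TensorProduct.map_tmul, LinearMap.id_apply, gaComul_single,
    LinearEquiv.coe_toLinearMap, TensorProduct.assoc_symm_tmul] at h
  have h2 := congrArg (fun t =>
    ((Finsupp.lapply g) ∘ₗ
      (tE k G (A ⊗[k] MonoidAlgebra k G)).toLinearMap) t) h
  simp only [map_finsuppSum, LinearMap.comp_apply, LinearEquiv.coe_toLinearMap,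
    Finsupp.lapply_apply] at h2
  have key : ∀ (y : A ⊗[k] MonoidAlgebra k G) (g' : G),
      (tE k G (A ⊗[k] MonoidAlgebra k G))
        (y ⊗ₜ[k] MonoidAlgebra.single g' (1 : k)) g = if g' = g then y else 0 := by
    intro y g'
    erw [tE_tmul_apply]
    rw [Finsupp.single_apply]
    by_cases hgg : g' = g <;> simp [hgg]
  have e1 : ((Fm ρ a).sum fun g' x =>
      (tE k G (A ⊗[k] MonoidAlgebra k G))
        ((ρ x) ⊗ₜ[k] MonoidAlgebra.single g' (1:k)) g)
      = (Fm ρ a).sum fun g' x => if g' = g then ρ x else 0 :=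
    Finsupp.sum_congr fun g' _ => key _ _
  have e2 : ((Fm ρ a).sum fun g' x =>
      (tE k G (A ⊗[k] MonoidAlgebra k G))
        ((x ⊗ₜ[k] MonoidAlgebra.single g' (1:k)) ⊗ₜ[k] MonoidAlgebra.single g' (1:k)) g)
      = (Fm ρ a).sum fun g' x => if g' = g then x ⊗ₜ[k] MonoidAlgebra.single g' (1:k) else 0 :=
    Finsupp.sum_congr fun g' _ => key _ _
  erw [e1, e2] at h2
  rw [Finsupp.sum_ite_eq' (Fm ρ a) g (fun _ x => ρ x),
    Finsupp.sum_ite_eq' (Fm ρ a) g (fun g' x => x ⊗ₜ[k] MonoidAlgebra.single g' (1:k))] at h2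
  by_cases hg : g ∈ (Fm ρ a).support
  · rw [if_pos hg, if_pos hg] at h2
    exact h2
  · rw [Finsupp.notMem_support_iff] at hg
    rw [hg, map_zero, TensorProduct.zero_tmul]

def bgr (g : G) : Submodule k A :=
  LinearMap.eqLocus ρ.toLinearMap
    ((TensorProduct.mk k A (MonoidAlgebra k G)).flip (MonoidAlgebra.single g (1:k)))

lemma mem_bgr {g : G} {a : A} :
    a ∈ bgr ρ g ↔ ρ a = a ⊗ₜ[k] MonoidAlgebra.single g (1:k) := Iff.rfl

variable
  (hcu : TensorProduct.map LinearMap.id (gaCounit k G) ∘ₗ ρ.toLinearMap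
      = (TensorProduct.rid k A).symm.toLinearMap)
  (hco : TensorProduct.map ρ.toLinearMap LinearMap.id ∘ₗ ρ.toLinearMap
      = (TensorProduct.assoc k A (MonoidAlgebra k G) (MonoidAlgebra k G)).symm.toLinearMap
          ∘ₗ TensorProduct.map LinearMap.id (gaComul k G) ∘ₗ ρ.toLinearMap)

def bdec (a : A) : ⨁ (g : G), ↥(bgr ρ g) :=
  ∑ g ∈ (Fm ρ a).support, DirectSum.of (fun g => ↥(bgr ρ g)) g
    ⟨Fm ρ a g, (mem_bgr ρ).mpr (rho_Fm_apply ρ hco a g)⟩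

lemma bdec_eq_sum_subset (a : A) {s : Finset G} (hs : (Fm ρ a).support ⊆ s) :
    bdec ρ hco a = ∑ g ∈ s, DirectSum.of (fun g => ↥(bgr ρ g)) g
      ⟨Fm ρ a g, (mem_bgr ρ).mpr (rho_Fm_apply ρ hco a g)⟩ := by
  rw [bdec]
  apply Finset.sum_subset hs
  intro g _ hg
  rw [Finsupp.notMem_support_iff] at hg
  have h0 : (⟨Fm ρ a g, (mem_bgr ρ).mpr (rho_Fm_apply ρ hco a g)⟩ : ↥(bgr ρ g)) = 0 :=
    Subtype.ext hg
  rw [h0, map_zero]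

lemma bdec_add (a b : A) : bdec ρ hco (a + b) = bdec ρ hco a + bdec ρ hco b := by
  classical
  have hsupp : (Fm ρ (a + b)).support ⊆ (Fm ρ a).support ∪ (Fm ρ b).support := by
    rw [map_add]; exact Finsupp.support_add
  rw [bdec_eq_sum_subset ρ hco (a + b) hsupp,
    bdec_eq_sum_subset ρ hco a (Finset.subset_union_left),
    bdec_eq_sum_subset ρ hco b (Finset.subset_union_right), ← Finset.sum_add_distrib]
  apply Finset.sum_congr rfl
  intro g _
  rw [← map_add]
  congr 1
  apply Subtype.ext
  simp

lemma bdec_apply (a : A) (g : G) :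
    bdec ρ hco a g = ⟨Fm ρ a g, (mem_bgr ρ).mpr (rho_Fm_apply ρ hco a g)⟩ := by
  classical
  rw [bdec, DFinsupp.finset_sum_apply]
  rw [Finset.sum_eq_single g ?h1 ?h2]
  · exact DirectSum.of_eq_same g _
  case h1 =>
    intro g' _ hne
    exact DirectSum.of_eq_of_ne g' g _ (Ne.symm hne)
  case h2 =>
    intro hg
    rw [Finsupp.notMem_support_iff] at hg
    have h0 : (⟨Fm ρ a g, (mem_bgr ρ).mpr (rho_Fm_apply ρ hco a g)⟩ : ↥(bgr ρ g)) = 0 :=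
      Subtype.ext hg
    rw [h0, map_zero]
    rfl

def bwdDec : DirectSum.Decomposition (bgr ρ) where
  decompose' := bdec ρ hco
  left_inv a := by
    rw [bdec, map_sum]
    simp only [DirectSum.coeAddMonoidHom_of]
    exact sum_Fm ρ hcu a
  right_inv x := by
    induction x using DirectSum.induction_on with
    | zero =>
      rw [map_zero, bdec]
      have h0 : Fm ρ (0 : A) = 0 := map_zero _
      have hs : ((Fm ρ) (0:A)).support = ∅ := by rw [h0]; rfl
      rw [hs, Finset.sum_empty]
    | of g m =>
      rw [DirectSum.coeAddMonoidHom_of]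
      have hm := (mem_bgr ρ).mp m.2
      have hF : Fm ρ (m : A) = Finsupp.single g (m : A) := Fm_of_rho_eq ρ hm
      refine DFinsupp.ext fun h => ?_
      rw [bdec_apply]
      apply Subtype.ext
      show Fm ρ (m : A) h = _
      rw [hF, Finsupp.single_apply, DirectSum.coe_of_apply]
      by_cases hgh : g = h <;> simp [hgh]
    | add x y hx hy =>
      rw [map_add, bdec_add ρ hco, hx, hy]

def bwdGrading : GroupGrading k G A where
  grading := bgr ρ
  decomposition := bwdDec ρ hcu hco
  one_mem := by
    rw [mem_bgr, map_one, Algebra.TensorProduct.one_def, MonoidAlgebra.one_def]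
  mul_mem := by
    intro g h x y hx hy
    rw [mem_bgr] at hx hy ⊢
    rw [map_mul, hx, hy, Algebra.TensorProduct.tmul_mul_tmul,
      MonoidAlgebra.single_mul_single, one_mul]

lemma fwd_bwd (a : A) : fwdHom (bwdGrading ρ hcu hco) a = ρ a := by
  letI := (bwdGrading ρ hcu hco).decomposition
  rw [fwdHom_eq_rhoOf, rhoOf]
  have hdec : ∀ g : G,
      ((DirectSum.decompose (bwdGrading ρ hcu hco).grading a) g : A) = Fm ρ a g := by
    intro g
    have h1 : DirectSum.decompose (bwdGrading ρ hcu hco).grading a = bdec ρ hco a := rfl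
    rw [h1]
    exact congrArg Subtype.val (bdec_apply ρ hco a g)
  rw [finsum_congr fun g => by rw [hdec g]]
  rw [finsum_eq_finset_sum_of_support_subset _ (s := (Fm ρ a).support) ?hs]
  · exact (rho_eq_sum ρ a).symm
  case hs =>
    intro g hg
    simp only [Function.mem_support, Finset.coe_sort_coe, Finset.mem_coe,
      Finsupp.mem_support_iff] at hg ⊢
    intro h0
    exact hg (by rw [h0, TensorProduct.zero_tmul])

lemma Fm_fwdHom (𝒜 : GroupGrading k G A) (a : A) (h : G) :
    letI := 𝒜.decomposition
    Fm (fwdHom 𝒜) a h = ((DirectSum.decompose 𝒜.grading a) h : A) := by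
  letI := 𝒜.decomposition
  have h1 : Fm (fwdHom 𝒜) a
      = (tE k G A).toLinearMap (fwdHom 𝒜 a) := rfl
  have h2 : (fwdHom 𝒜) a = rhoOf k G A 𝒜 a := by rw [fwdHom_eq_rhoOf]
  rw [h1, h2, rhoOf]
  show ((Finsupp.lapply h) ∘ₗ (tE k G A).toLinearMap)
      (∑ᶠ g : G, ((DirectSum.decompose 𝒜.grading a) g : A) ⊗ₜ[k] MonoidAlgebra.single g (1:k))
    = _
  have h3 := AddMonoidHom.map_finsum
    ((Finsupp.lapply h ∘ₗ (tE k G A).toLinearMap :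
        (A ⊗[k] MonoidAlgebra k G) →ₗ[k] A).toAddMonoidHom)
    (f := fun g : G =>
      ((DirectSum.decompose 𝒜.grading a) g : A) ⊗ₜ[k] MonoidAlgebra.single g (1:k))
    (rhoOf_finite 𝒜 a)
  rw [LinearMap.toAddMonoidHom_coe] at h3
  have key : ∀ g : G,
      ((Finsupp.lapply h) ∘ₗ (tE k G A).toLinearMap)
        (((DirectSum.decompose 𝒜.grading a) g : A) ⊗ₜ[k] MonoidAlgebra.single g (1:k))
      = if g = h then ((DirectSum.decompose 𝒜.grading a) g : A) else 0 := by
    intro g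
    rw [LinearMap.comp_apply, LinearEquiv.coe_toLinearMap, Finsupp.lapply_apply]
    erw [tE_tmul_apply]
    rw [Finsupp.single_apply]
    by_cases hgh : g = h <;> simp [hgh]
  refine h3.trans ?_
  refine (finsum_eq_single _ h fun g hne => ?_).trans ?_
  · exact (key g).trans (if_neg hne)
  · exact (key h).trans (if_pos rfl)

lemma bgr_fwd (𝒜 : GroupGrading k G A) : bgr (fwdHom 𝒜) = 𝒜.grading := by
  letI := 𝒜.decomposition
  funext g
  ext a
  rw [mem_bgr]
  constructor
  · intro ha
    have hF : Fm (fwdHom 𝒜) a = Finsupp.single g a := Fm_of_rho_eq _ ha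
    have hdec : ∀ h : G, ((DirectSum.decompose 𝒜.grading a) h : A) = Finsupp.single g a h := by
      intro h
      rw [← Fm_fwdHom 𝒜 a h, hF]
    have hof : DirectSum.decompose 𝒜.grading a
        = DirectSum.of _ g ((DirectSum.decompose 𝒜.grading a) g) := by
      refine DFinsupp.ext fun h => ?_
      by_cases hgh : g = h
      · subst hgh; rw [DirectSum.of_eq_same]
      · apply Subtype.ext
        rw [DirectSum.coe_of_apply, if_neg hgh, hdec h, Finsupp.single_apply, if_neg hgh]
        rfl
    have ha2 : a = (DirectSum.decompose 𝒜.grading).symm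
        (DirectSum.of _ g ((DirectSum.decompose 𝒜.grading a) g)) := by
      rw [← hof, Equiv.symm_apply_apply]
    rw [DirectSum.decompose_symm_of] at ha2
    rw [ha2]
    exact Submodule.coe_mem _
  · intro ha
    exact fwdHom_apply_of_mem 𝒜 ha

lemma GroupGrading.ext' {X Y : GroupGrading k G A} (h : X.grading = Y.grading) : X = Y := by
  obtain ⟨gX, dX, oX, mX⟩ := X
  obtain ⟨gY, dY, oY, mY⟩ := Y
  dsimp only at h
  cases h
  have hd : dX = dY := Subsingleton.elim _ _
  cases hd
  rfl

end CohenMontgomery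
end Bwd

/-- Cohen–Montgomery: the assignment `𝒜 ↦ ρ_𝒜` is a bijection from the set of `G`-gradings
of `A` onto the set of comodule-algebra structures on `A` over the group algebra `k[G]`. -/
theorem grading_equiv_comodule_algebra_structures
    (k G A : Type*) [CommRing k] [Group G] [DecidableEq G] [Ring A] [Algebra k A] :
    ∃ e : GroupGrading k G A ≃
        {ρ : A →ₐ[k] A ⊗[k] MonoidAlgebra k G //
          (TensorProduct.map LinearMap.id (gaCounit k G) ∘ₗ ρ.toLinearMap
            = (TensorProduct.rid k A).symm.toLinearMap) ∧
          (TensorProduct.map ρ.toLinearMap LinearMap.id ∘ₗ ρ.toLinearMap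
            = (TensorProduct.assoc k A (MonoidAlgebra k G) (MonoidAlgebra k G)).symm.toLinearMap
                ∘ₗ TensorProduct.map LinearMap.id (gaComul k G) ∘ₗ ρ.toLinearMap)},
      ∀ 𝒜 : GroupGrading k G A, ⇑(e 𝒜).val = rhoOf k G A 𝒜 := by
  refine ⟨⟨fun 𝒜 => ⟨CohenMontgomery.fwdHom 𝒜,
      CohenMontgomery.fwdHom_counit 𝒜, CohenMontgomery.fwdHom_coassoc 𝒜⟩,
    fun s => CohenMontgomery.bwdGrading s.1 s.2.1 s.2.2, ?_, ?_⟩,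
    fun 𝒜 => CohenMontgomery.fwdHom_eq_rhoOf 𝒜⟩
  · intro 𝒜
    exact CohenMontgomery.GroupGrading.ext' (CohenMontgomery.bgr_fwd 𝒜)
  · intro s
    exact Subtype.ext (AlgHom.ext fun a => CohenMontgomery.fwd_bwd s.1 s.2.1 s.2.2 a)
end

section
/- Let k be a commutative ring, S a type, and M a k-module. The assignment sending an S-indexed internal direct sum decomposition of M (a family ℳ : S → Submodule k M together with decomposition data exhibiting M as the internal direct sum of the ℳ s) to the k-linear map μ_ℳ : M →ₗ[k] M ⊗[k] (S →₀ k) defined by μ_ℳ(m) = Σ_{s ∈ S} (the ℳ s-component of m) ⊗ₜ single s 1 is a bijection from the set of S-indexed internal direct sum decompositions of M onto the set of counital coassociative coactions of S →₀ k on M. -/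
open TensorProduct

noncomputable section

variable (k S M : Type*) [CommRing k] [DecidableEq S] [AddCommGroup M] [Module k M]

/-- The coaction `μ_ℳ : M →ₗ[k] M ⊗[k] (S →₀ k)` associated to an internal direct sum
decomposition `ℳ` of `M`, as a plain function:
`μ_ℳ m = Σ_{s ∈ S} (the ℳ s-component of m) ⊗ₜ single s 1`. -/
def muOf (ℳ : S → Submodule k M) [DirectSum.Decomposition ℳ] : M → M ⊗[k] (S →₀ k) :=
  fun m => ∑ᶠ s : S, ((DirectSum.decompose ℳ m) s : M) ⊗ₜ[k] Finsupp.single s (1 : k)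

end

open scoped DirectSum


namespace DecompCoact

noncomputable section
variable {k S M : Type*} [CommRing k] [DecidableEq S] [AddCommGroup M] [Module k M]

/-- Sum of all values of a finsupp, as a linear map. -/
def Tot : (S →₀ M) →ₗ[k] M := Finsupp.lsum ℕ fun _ => (LinearMap.id : M →ₗ[k] M)

lemma Tot_apply (g : S →₀ M) : Tot (k := k) g = ∑ s ∈ g.support, g s := by
  simp [Tot, Finsupp.lsum_apply, Finsupp.sum]

variable (μ : M →ₗ[k] M ⊗[k] (S →₀ k))

def fmap : M →ₗ[k] (S →₀ M) :=
  (TensorProduct.finsuppScalarRight k k M S).toLinearMap ∘ₗ μ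

def proj (t : S) : M →ₗ[k] M := Finsupp.lapply t ∘ₗ fmap μ

lemma proj_apply (t : S) (m : M) : proj μ t m = fmap μ m t := rfl

lemma mu_eq (m : M) :
    μ m = (TensorProduct.finsuppScalarRight k k M S).symm (fmap μ m) := by
  simp only [fmap, LinearMap.comp_apply, LinearEquiv.coe_coe,
    LinearEquiv.symm_apply_apply]

lemma key1 :
    (TensorProduct.rid k M).toLinearMap ∘ₗ TensorProduct.map LinearMap.id Coalgebra.counit
      = (Tot : (S →₀ M) →ₗ[k] M) ∘ₗ (TensorProduct.finsuppScalarRight k k M S).toLinearMap := by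
  ext m s
  simp only [AlgebraTensorModule.curry_apply, TensorProduct.curry_apply,
    LinearMap.coe_comp, Function.comp_apply, Finsupp.lsingle_apply,
    LinearMap.coe_restrictScalars, LinearEquiv.coe_coe, TensorProduct.map_tmul,
    LinearMap.id_coe, id_eq, Finsupp.counit_single, CommSemiring.counit_apply,
    TensorProduct.rid_tmul, TensorProduct.finsuppScalarRight_apply_tmul]
  simp [Tot, Finsupp.sum_single_index]

lemma key2 (t : S) :
    (TensorProduct.rid k (M ⊗[k] (S →₀ k))).toLinearMap
        ∘ₗ TensorProduct.map LinearMap.id (Finsupp.lapply t)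
        ∘ₗ TensorProduct.map μ LinearMap.id
      = μ ∘ₗ (TensorProduct.rid k M).toLinearMap
          ∘ₗ TensorProduct.map LinearMap.id (Finsupp.lapply t) := by
  ext m s
  simp only [AlgebraTensorModule.curry_apply, TensorProduct.curry_apply,
    LinearMap.coe_comp, Function.comp_apply, Finsupp.lsingle_apply,
    LinearMap.coe_restrictScalars, LinearEquiv.coe_coe, TensorProduct.map_tmul,
    LinearMap.id_coe, id_eq, TensorProduct.rid_tmul, Finsupp.lapply_apply,
    Finsupp.single_apply]
  by_cases h : s = t <;> simp [h]

lemma key3 (t : S) :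
    (TensorProduct.rid k (M ⊗[k] (S →₀ k))).toLinearMap
        ∘ₗ TensorProduct.map LinearMap.id (Finsupp.lapply t)
        ∘ₗ (TensorProduct.assoc k M (S →₀ k) (S →₀ k)).symm.toLinearMap
        ∘ₗ TensorProduct.map LinearMap.id Coalgebra.comul
      = TensorProduct.map LinearMap.id (Finsupp.lsingle t ∘ₗ Finsupp.lapply t) := by
  ext m s
  simp only [AlgebraTensorModule.curry_apply, TensorProduct.curry_apply,
    LinearMap.coe_comp, Function.comp_apply, Finsupp.lsingle_apply,
    LinearMap.coe_restrictScalars, LinearEquiv.coe_coe, TensorProduct.map_tmul,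
    LinearMap.id_coe, id_eq, Finsupp.comul_single, CommSemiring.comul_apply,
    TensorProduct.assoc_symm_tmul, TensorProduct.rid_tmul, Finsupp.lapply_apply,
    Finsupp.single_apply]
  by_cases h : s = t <;> simp [h]

lemma key4 (t : S) :
    (TensorProduct.finsuppScalarRight k k M S).toLinearMap
        ∘ₗ TensorProduct.map LinearMap.id (Finsupp.lsingle t ∘ₗ Finsupp.lapply t)
      = Finsupp.lsingle t ∘ₗ Finsupp.lapply t
          ∘ₗ (TensorProduct.finsuppScalarRight k k M S).toLinearMap := by
  ext m s u
  simp only [AlgebraTensorModule.curry_apply, TensorProduct.curry_apply,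
    LinearMap.coe_comp, Function.comp_apply, Finsupp.lsingle_apply,
    LinearMap.coe_restrictScalars, LinearEquiv.coe_coe, TensorProduct.map_tmul,
    LinearMap.id_coe, id_eq, Finsupp.lapply_apply,
    TensorProduct.finsuppScalarRight_apply_tmul_apply, Finsupp.single_apply]
  by_cases h : s = t <;> by_cases h2 : t = u <;> simp [h, h2]

variable {μ}

/-- Counitality gives that the components sum to the identity. -/
lemma sum_proj
    (h1 : TensorProduct.map LinearMap.id Coalgebra.counit ∘ₗ μ
      = (TensorProduct.rid k M).symm.toLinearMap) (m : M) :
    Tot (k := k) (fmap μ m) = m := by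
  have h := LinearMap.congr_fun (key1 (k := k) (S := S) (M := M)) (μ m)
  simp only [LinearMap.comp_apply, LinearEquiv.coe_coe] at h
  have h1m := LinearMap.congr_fun h1 m
  simp only [LinearMap.comp_apply, LinearEquiv.coe_coe] at h1m
  rw [fmap, LinearMap.comp_apply]
  rw [LinearEquiv.coe_coe, ← h, h1m, LinearEquiv.apply_symm_apply]

/-- Coassociativity gives `μ ∘ proj t = (id ⊗ (single t ∘ eval t)) ∘ μ`. -/
lemma mu_proj_apply
    (h2 : TensorProduct.map μ LinearMap.id ∘ₗ μ
      = (TensorProduct.assoc k M (S →₀ k) (S →₀ k)).symm.toLinearMap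
          ∘ₗ TensorProduct.map LinearMap.id Coalgebra.comul ∘ₗ μ)
    (t : S) (m : M) :
    μ (proj μ t m)
      = TensorProduct.map LinearMap.id (Finsupp.lsingle t ∘ₗ Finsupp.lapply t) (μ m) := by
  have a := LinearMap.congr_fun (key2 μ t) (μ m)
  have b := LinearMap.congr_fun (key3 (k := k) (S := S) (M := M) t) (μ m)
  have c := LinearMap.congr_fun h2 m
  simp only [LinearMap.comp_apply, LinearEquiv.coe_coe] at a b c
  have hproj : proj μ t m
      = (TensorProduct.rid k M) (TensorProduct.map LinearMap.id (Finsupp.lapply t) (μ m)) := by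
    rw [proj_apply, fmap, LinearMap.comp_apply, LinearEquiv.coe_coe,
      TensorProduct.finsuppScalarRight_apply]
    rfl
  rw [hproj, ← a, c, b]

lemma fmap_proj
    (h2 : TensorProduct.map μ LinearMap.id ∘ₗ μ
      = (TensorProduct.assoc k M (S →₀ k) (S →₀ k)).symm.toLinearMap
          ∘ₗ TensorProduct.map LinearMap.id Coalgebra.comul ∘ₗ μ)
    (t : S) (m : M) :
    fmap μ (proj μ t m) = Finsupp.single t (proj μ t m) := by
  have k4 := LinearMap.congr_fun (key4 (k := k) (S := S) (M := M) t) (μ m)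
  simp only [LinearMap.comp_apply, LinearEquiv.coe_coe] at k4
  rw [fmap, LinearMap.comp_apply, LinearEquiv.coe_coe, mu_proj_apply h2, k4]
  rw [proj_apply, fmap, LinearMap.comp_apply, LinearEquiv.coe_coe]
  simp

lemma proj_proj
    (h2 : TensorProduct.map μ LinearMap.id ∘ₗ μ
      = (TensorProduct.assoc k M (S →₀ k) (S →₀ k)).symm.toLinearMap
          ∘ₗ TensorProduct.map LinearMap.id Coalgebra.comul ∘ₗ μ)
    (s t : S) (m : M) :
    proj μ s (proj μ t m) = if s = t then proj μ t m else 0 := by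
  rw [proj_apply, fmap_proj h2, Finsupp.single_apply]
  simp [eq_comm]


variable (μ : M →ₗ[k] M ⊗[k] (S →₀ k))
def comps : S → Submodule k M := fun s => LinearMap.range (proj μ s)

variable {μ}

lemma proj_coe
    (h2 : TensorProduct.map μ LinearMap.id ∘ₗ μ
      = (TensorProduct.assoc k M (S →₀ k) (S →₀ k)).symm.toLinearMap
          ∘ₗ TensorProduct.map LinearMap.id Coalgebra.comul ∘ₗ μ)
    (t : S) (x : ⨁ s, (comps μ s)) :
    proj μ t (DirectSum.coeAddMonoidHom (comps μ) x) = ↑(x t) := by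
  induction x using DirectSum.induction_on with
  | zero => simp
  | of s y =>
    obtain ⟨y, n, rfl⟩ := y
    rw [DirectSum.coeAddMonoidHom_of]
    by_cases h : s = t
    · subst h
      rw [DirectSum.of_eq_same]
      simpa using proj_proj h2 s s n
    · rw [DirectSum.of_eq_of_ne _ _ _ (Ne.symm h)]
      have := proj_proj h2 t s n
      simp only [if_neg (Ne.symm h)] at this
      simpa using this
  | add x y hx hy =>
    rw [map_add, map_add, DirectSum.add_apply, Submodule.coe_add, hx, hy]

lemma isInternal_comps
    (h1 : TensorProduct.map LinearMap.id Coalgebra.counit ∘ₗ μ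
      = (TensorProduct.rid k M).symm.toLinearMap)
    (h2 : TensorProduct.map μ LinearMap.id ∘ₗ μ
      = (TensorProduct.assoc k M (S →₀ k) (S →₀ k)).symm.toLinearMap
          ∘ₗ TensorProduct.map LinearMap.id Coalgebra.comul ∘ₗ μ) :
    DirectSum.IsInternal (comps μ) := by
  constructor
  · rw [injective_iff_map_eq_zero]
    intro x hx
    refine DFinsupp.ext fun t => ?_
    have := proj_coe h2 t x
    rw [hx, map_zero] at this
    exact (Submodule.coe_eq_zero.mp this.symm)
  · intro m
    refine ⟨∑ s ∈ (fmap μ m).support,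
      DirectSum.of (fun s => comps μ s) s ⟨fmap μ m s, ⟨m, rfl⟩⟩, ?_⟩
    rw [map_sum]
    simp only [DirectSum.coeAddMonoidHom_of]
    have hTot : (∑ s ∈ (fmap μ m).support, fmap μ m s) = m := by
      rw [← Tot_apply (k := k)]; exact sum_proj h1 m
    simpa using hTot

def decOf
    (h1 : TensorProduct.map LinearMap.id Coalgebra.counit ∘ₗ μ
      = (TensorProduct.rid k M).symm.toLinearMap)
    (h2 : TensorProduct.map μ LinearMap.id ∘ₗ μ
      = (TensorProduct.assoc k M (S →₀ k) (S →₀ k)).symm.toLinearMap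
          ∘ₗ TensorProduct.map LinearMap.id Coalgebra.comul ∘ₗ μ) :
    DirectSum.Decomposition (comps μ) :=
  (isInternal_comps h1 h2).chooseDecomposition

lemma decompose_comps
    (h1 : TensorProduct.map LinearMap.id Coalgebra.counit ∘ₗ μ
      = (TensorProduct.rid k M).symm.toLinearMap)
    (h2 : TensorProduct.map μ LinearMap.id ∘ₗ μ
      = (TensorProduct.assoc k M (S →₀ k) (S →₀ k)).symm.toLinearMap
          ∘ₗ TensorProduct.map LinearMap.id Coalgebra.comul ∘ₗ μ)
    (t : S) (m : M) :
    letI := decOf h1 h2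
    ((DirectSum.decompose (comps μ) m t : comps μ t) : M) = proj μ t m := by
  letI := decOf h1 h2
  have hm : DirectSum.coeAddMonoidHom (comps μ) (DirectSum.decompose (comps μ) m) = m :=
    (DirectSum.decompose (comps μ)).left_inv m
  conv_rhs => rw [← hm, proj_coe h2]

section Fwd
variable (ℳ : S → Submodule k M) [DirectSum.Decomposition ℳ]

def toFinsuppMap : (⨁ s, (ℳ s : Submodule k M)) →ₗ[k] (S →₀ M) :=
  DirectSum.toModule k S _ fun s => Finsupp.lsingle s ∘ₗ (ℳ s).subtype

set_option maxHeartbeats 1000000 in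
lemma toFinsuppMap_lof (s : S) (y : ℳ s) :
    toFinsuppMap ℳ (DirectSum.lof k S _ s y) = Finsupp.single s ↑y := by
  rw [toFinsuppMap, DirectSum.toModule_lof]
  rfl

lemma toFinsuppMap_apply (x : ⨁ s, (ℳ s : Submodule k M)) (t : S) :
    toFinsuppMap ℳ x t = ↑(x t) := by
  induction x using DirectSum.induction_on with
  | zero => simp
  | of s y =>
    rw [← DirectSum.lof_eq_of k, toFinsuppMap_lof]
    by_cases h : s = t
    · subst h; rw [DirectSum.lof_eq_of, DirectSum.of_eq_same, Finsupp.single_eq_same]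
    · rw [DirectSum.lof_eq_of, DirectSum.of_eq_of_ne _ _ _ (Ne.symm h),
        Finsupp.single_eq_of_ne' h, Submodule.coe_zero]
  | add x y hx hy =>
    rw [map_add, Finsupp.add_apply, DirectSum.add_apply, Submodule.coe_add, hx, hy]

def Lmap : M →ₗ[k] M ⊗[k] (S →₀ k) :=
  (TensorProduct.finsuppScalarRight k k M S).symm.toLinearMap
    ∘ₗ toFinsuppMap ℳ ∘ₗ (DirectSum.decomposeLinearEquiv ℳ).toLinearMap

lemma Lmap_apply (m : M) :
    Lmap ℳ m = (TensorProduct.finsuppScalarRight k k M S).symm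
      (toFinsuppMap ℳ (DirectSum.decompose ℳ m)) := by
  simp [Lmap, DirectSum.decomposeLinearEquiv_apply]

lemma fmap_Lmap (m : M) :
    fmap (Lmap ℳ) m = toFinsuppMap ℳ (DirectSum.decompose ℳ m) := by
  rw [fmap, LinearMap.comp_apply, LinearEquiv.coe_coe, Lmap_apply,
    LinearEquiv.apply_symm_apply]

lemma proj_Lmap (t : S) (m : M) :
    proj (Lmap ℳ) t m = ↑(DirectSum.decompose ℳ m t) := by
  rw [proj_apply, fmap_Lmap, toFinsuppMap_apply]

lemma Lmap_coe {t : S} (y : ℳ t) :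
    Lmap ℳ ↑y = (↑y : M) ⊗ₜ[k] Finsupp.single t (1 : k) := by
  rw [Lmap_apply, DirectSum.decompose_coe, ← DirectSum.lof_eq_of k, toFinsuppMap_lof,
    TensorProduct.finsuppScalarRight_symm_apply_single]

lemma Lmap_counit :
    TensorProduct.map LinearMap.id Coalgebra.counit ∘ₗ Lmap ℳ
      = (TensorProduct.rid k M).symm.toLinearMap := by
  refine LinearMap.ext (DirectSum.Decomposition.inductionOn ℳ ?_ ?_ ?_)
  · simp
  · intro t y
    rw [LinearMap.comp_apply, Lmap_coe]
    simp [TensorProduct.rid_symm_apply]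
  · intro a b ha hb
    simp only [LinearMap.comp_apply] at ha hb ⊢
    rw [map_add, map_add, ha, hb, map_add]

lemma Lmap_coassoc :
    TensorProduct.map (Lmap ℳ) LinearMap.id ∘ₗ Lmap ℳ
      = (TensorProduct.assoc k M (S →₀ k) (S →₀ k)).symm.toLinearMap
          ∘ₗ TensorProduct.map LinearMap.id Coalgebra.comul ∘ₗ Lmap ℳ := by
  refine LinearMap.ext (DirectSum.Decomposition.inductionOn ℳ ?_ ?_ ?_)
  · simp
  · intro t y
    simp only [LinearMap.comp_apply, Lmap_coe]
    rw [TensorProduct.map_tmul]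
    simp only [LinearMap.id_coe, id_eq, Lmap_coe, Finsupp.comul_single,
      CommSemiring.comul_apply, TensorProduct.map_tmul, Finsupp.lsingle_apply,
      LinearEquiv.coe_coe, TensorProduct.assoc_symm_tmul]
  · intro a b ha hb
    simp only [LinearMap.comp_apply] at ha hb ⊢
    rw [map_add, map_add, ha, hb, map_add, map_add]

lemma Lmap_fun : ⇑(Lmap ℳ) = fun m =>
    ∑ᶠ s : S, ((DirectSum.decompose ℳ m) s : M) ⊗ₜ[k] Finsupp.single s (1 : k) := by
  classical
  funext m
  have hsub : (Function.support fun s =>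
      ((DirectSum.decompose ℳ m) s : M) ⊗ₜ[k] Finsupp.single s (1 : k))
      ⊆ ↑(DFinsupp.support (DirectSum.decompose ℳ m)) := by
    intro s hs
    simp only [Function.mem_support, ne_eq] at hs
    simp only [Finset.coe_sort_coe, Finset.mem_coe, DFinsupp.mem_support_iff, ne_eq]
    intro h0
    exact hs (by rw [h0, Submodule.coe_zero, TensorProduct.zero_tmul])
  rw [finsum_eq_sum_of_support_subset _ hsub, Lmap_apply]
  conv_lhs => rw [← DirectSum.sum_support_of (DirectSum.decompose ℳ m)]
  rw [map_sum, map_sum]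
  refine Finset.sum_congr rfl fun s _ => ?_
  rw [← DirectSum.lof_eq_of k, toFinsuppMap_lof,
    TensorProduct.finsuppScalarRight_symm_apply_single]

end Fwd
end
end DecompCoact

/-- The assignment sending an `S`-indexed internal direct sum decomposition `ℳ` of `M` to
the coaction `μ_ℳ` is a bijection from the set of such decompositions onto the set of
counital coassociative coactions of `S →₀ k` on `M`. -/
theorem decomposition_equiv_coactions
    (k S M : Type*) [CommRing k] [DecidableEq S] [AddCommGroup M] [Module k M] :
    ∃ e : (Σ ℳ : S → Submodule k M, DirectSum.Decomposition ℳ) ≃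
        {μ : M →ₗ[k] M ⊗[k] (S →₀ k) //
          (TensorProduct.map LinearMap.id Coalgebra.counit ∘ₗ μ
            = (TensorProduct.rid k M).symm.toLinearMap) ∧
          (TensorProduct.map μ LinearMap.id ∘ₗ μ
            = (TensorProduct.assoc k M (S →₀ k) (S →₀ k)).symm.toLinearMap
                ∘ₗ TensorProduct.map LinearMap.id Coalgebra.comul ∘ₗ μ)},
      ∀ x : Σ ℳ : S → Submodule k M, DirectSum.Decomposition ℳ,
        ⇑(e x).val = @muOf k S M _ _ _ _ x.1 x.2 := by
  classical
  refine ⟨{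
    toFun := fun x => ⟨@DecompCoact.Lmap k S M _ _ _ _ x.1 x.2,
      @DecompCoact.Lmap_counit k S M _ _ _ _ x.1 x.2,
      @DecompCoact.Lmap_coassoc k S M _ _ _ _ x.1 x.2⟩
    invFun := fun μ => ⟨DecompCoact.comps μ.1, DecompCoact.decOf μ.2.1 μ.2.2⟩
    left_inv := ?_
    right_inv := ?_ }, ?_⟩
  · rintro ⟨ℳ, d⟩
    letI := d
    have hM : DecompCoact.comps (DecompCoact.Lmap ℳ) = ℳ := by
      funext s
      apply le_antisymm
      · rintro x ⟨m, rfl⟩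
        rw [DecompCoact.proj_Lmap]
        exact ((DirectSum.decompose ℳ) m s).2
      · intro m hm
        exact ⟨m, by rw [DecompCoact.proj_Lmap, DirectSum.decompose_of_mem_same ℳ hm]⟩
    exact Sigma.ext hM (Subsingleton.helim (congrArg (fun N => DirectSum.Decomposition N) hM) _ _)
  · rintro ⟨μ, h1, h2⟩
    refine Subtype.ext ?_
    letI := DecompCoact.decOf h1 h2
    apply LinearMap.ext; intro m
    rw [DecompCoact.Lmap_apply, DecompCoact.mu_eq μ m]
    congr 1
    ext t
    rw [DecompCoact.toFinsuppMap_apply, DecompCoact.decompose_comps h1 h2,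
      DecompCoact.proj_apply]
  · rintro ⟨ℳ, d⟩
    letI := d
    show ⇑(DecompCoact.Lmap ℳ) = muOf k S M ℳ
    exact DecompCoact.Lmap_fun ℳ
end

section
/- Let k be a commutative ring, S a type, M a k-module, and ℳ : S → Submodule k M a family of submodules forming an internal direct sum decomposition of M. Then the k-linear map μ_ℳ : M →ₗ[k] M ⊗[k] (S →₀ k) defined by μ_ℳ(m) = Σ_{s ∈ S} (the ℳ s-component of m) ⊗ₜ single s 1 is a counital and coassociative coaction of S →₀ k on M. -/
open TensorProduct

/-- For an internal direct sum decomposition `ℳ : S → Submodule k M` of a `k`-module `M`,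
the `k`-linear map `μ_ℳ : M →ₗ[k] M ⊗[k] (S →₀ k)`,
`μ_ℳ m = Σ_{s ∈ S} (the ℳ s-component of m) ⊗ₜ single s 1`, is a counital and
coassociative coaction of the coalgebra `S →₀ k` on `M`. -/
theorem coaction_of_decomposition
    (k S M : Type*) [CommRing k] [DecidableEq S] [AddCommGroup M] [Module k M]
    (ℳ : S → Submodule k M) [DirectSum.Decomposition ℳ] :
    ∃ μ : M →ₗ[k] M ⊗[k] (S →₀ k),
      (∀ m : M,
        μ m = ∑ᶠ s : S, ((DirectSum.decompose ℳ m) s : M) ⊗ₜ[k] Finsupp.single s (1 : k)) ∧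
      (TensorProduct.map LinearMap.id Coalgebra.counit ∘ₗ μ
        = (TensorProduct.rid k M).symm.toLinearMap) ∧
      (TensorProduct.map μ LinearMap.id ∘ₗ μ
        = (TensorProduct.assoc k M (S →₀ k) (S →₀ k)).symm.toLinearMap
            ∘ₗ TensorProduct.map LinearMap.id Coalgebra.comul ∘ₗ μ) := by
  set μ : M →ₗ[k] M ⊗[k] (S →₀ k) :=
    (DirectSum.toModule k S _ fun s =>
      (TensorProduct.mk k M (S →₀ k)).flip (Finsupp.single s 1) ∘ₗ (ℳ s).subtype)
    ∘ₗ (DirectSum.decomposeLinearEquiv ℳ).toLinearMap with hμ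
  have key : ∀ (s : S) (x : ℳ s), μ (x : M) = (x : M) ⊗ₜ[k] Finsupp.single s (1 : k) := by
    intro s x
    have : DirectSum.decompose ℳ (x : M) = DirectSum.lof k S (fun s => ℳ s) s x := by
      rw [DirectSum.decompose_coe, DirectSum.lof_eq_of]
    simp [hμ, this, DirectSum.toModule_lof]
  refine ⟨μ, ?_, ?_, ?_⟩
  · intro m
    induction m using DirectSum.Decomposition.inductionOn ℳ with
    | zero => simp
    | @homogeneous s x =>
      rw [key s x, finsum_eq_single _ s]
      · rw [DirectSum.decompose_coe, DirectSum.of_eq_same]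
      · intro t ht
        rw [DirectSum.decompose_coe, DirectSum.of_eq_of_ne _ _ _ ht]
        simp
    | add m m' hm hm' =>
      have fin : ∀ x : M, (Function.support
          fun s => ((DirectSum.decompose ℳ x) s : M) ⊗ₜ[k] Finsupp.single s (1 : k)).Finite := by
        intro x
        apply Set.Finite.subset (DFinsupp.finite_support (DirectSum.decompose ℳ x))
        intro s hs
        simp only [Function.mem_support] at hs
        intro h0
        apply hs
        rw [h0]
        simp
      rw [map_add, hm, hm', ← finsum_add_distrib (fin m) (fin m')]
      apply finsum_congr
      intro s
      rw [DirectSum.decompose_add, DirectSum.add_apply, Submodule.coe_add,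
        TensorProduct.add_tmul]
  · ext1 m
    induction m using DirectSum.Decomposition.inductionOn ℳ with
    | zero => simp
    | @homogeneous s x =>
      simp only [LinearMap.comp_apply, key s x, TensorProduct.map_tmul,
        Finsupp.counit_single, LinearMap.id_apply, LinearEquiv.coe_coe,
        TensorProduct.rid_symm_apply]
      norm_num
    | add m m' hm hm' => simp only [map_add, hm, hm']
  · ext1 m
    induction m using DirectSum.Decomposition.inductionOn ℳ with
    | zero => simp
    | @homogeneous s x =>
      simp only [LinearMap.comp_apply, key s x, TensorProduct.map_tmul,
        Finsupp.comul_single, LinearMap.id_apply, LinearEquiv.coe_coe]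
      have h1 : Coalgebra.comul (R := k) (1 : k) = (1 : k) ⊗ₜ[k] (1 : k) := by
        simp [CommSemiring.comul_apply]
      rw [h1]
      simp [TensorProduct.assoc_symm_tmul]
    | add m m' hm hm' => simp only [map_add, hm, hm']
end
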